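/- Let m ≥ 3, β = (m+√(m²−4))/2, U as above, and let n ∈ ℕ have U-expansion (n)_U = a_N a_{N−1} ⋯ a_1 a_0 (i.e., n = ∑_{k=0}^{N} a_k U_k with a_N ≠ 0 and ∑_{k=0}^{i} a_k U_k < U_{i+1} for every i ≤ N). Then ⌊n/β⌋ = ∑_{k=1}^{N} a_k U_{k−1}, and moreover this representation a_N ⋯ a_1 is itself a greedy representation (∑_{k=1}^{i} a_k U_{k−1} < U_i for each i ≤ N), while the fractional part satisfies {n/β} = ∑_{k=1}^{N+1} a_{k−1} β^{−k}. -/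

import Mathlib

/-- The sequence `U` from the paper, with index shifted by one:
`U m 0 = U_{-1} = 0`, `U m 1 = U_0 = 1`, `U m (k+2) = m * U m (k+1) - U m k`. -/
def U (m : ℕ) : ℕ → ℤ
  | 0 => 0
  | 1 => 1
  | (k + 2) => m * U m (k + 1) - U m k

lemma U_rec (m : ℕ) (k : ℕ) : U m (k+2) = m * U m (k+1) - U m k := rfl

lemma U_facts (m : ℕ) (hm : 3 ≤ m) : ∀ k, 0 ≤ U m k ∧ U m k < U m (k+1)
  | 0 => by simp [U]
  | 1 => by
      have : (3:ℤ) ≤ m := by exact_mod_cast hm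
      simp [U]; omega
  | (k+2) => by
      have h1 := U_facts m hm k
      have hm' : (3:ℤ) ≤ m := by exact_mod_cast hm
      have h2 : U m (k+3) = m * U m (k+2) - U m (k+1) := rfl
      have h3 : U m (k+2) = m * U m (k+1) - U m k := rfl
      have hp1 : 0 ≤ ((m:ℤ) - 3) * U m (k+1) :=
        mul_nonneg (by linarith) (by linarith [h1.1, h1.2])
      have hX : U m (k+1) + 1 ≤ ((m:ℤ)-1) * U m (k+1) - U m k := by
        nlinarith [h1.1, h1.2]
      have hp2 : 0 ≤ ((m:ℤ) - 3) * (((m:ℤ)-1) * U m (k+1) - U m k) :=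
        mul_nonneg (by linarith) (by linarith [h1.1, h1.2])
      constructor
      · rw [h3]; nlinarith [h1.1, h1.2]
      · rw [h2, h3]; nlinarith [h1.1, h1.2]

lemma m_eq (m : ℕ) (β : ℝ) (hb1 : 1 < β) (hb2 : β^2 = m*β - 1) :
    (m:ℝ) = β + β⁻¹ := by
  have hb0 : β ≠ 0 := by positivity
  field_simp
  linear_combination -hb2

lemma U_real (m : ℕ) (β : ℝ) (hb1 : 1 < β) (hb2 : β^2 = m*β - 1) :
    ∀ k, ((U m (k+1) : ℝ)) = β * (U m k : ℝ) + (β⁻¹)^k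
  | 0 => by simp [U]
  | 1 => by
      have h2 : (U m 2 : ℝ) = m := by norm_num [U_rec, U]
      have h1 : (U m 1 : ℝ) = 1 := by norm_num [U]
      rw [h2, h1, m_eq m β hb1 hb2]
      ring
  | (k+2) => by
      have h1 := U_real m β hb1 hb2 k
      have h2 := U_real m β hb1 hb2 (k+1)
      have hb0 : β ≠ 0 := by positivity
      rw [U_rec]
      push_cast
      rw [h2, h1, m_eq m β hb1 hb2]
      field_simp
      ring_nf
      field_simp
      ring

/-- partial sums -/
def SpZ (m : ℕ) (a : ℕ → ℕ) (i : ℕ) : ℤ := ∑ k ∈ Finset.range (i+1), (a k : ℤ) * U m (k+1)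
def SZ (m : ℕ) (a : ℕ → ℕ) (i : ℕ) : ℤ := ∑ k ∈ Finset.range (i+1), (a k : ℤ) * U m k
noncomputable def Tsum (a : ℕ → ℕ) (β : ℝ) (i : ℕ) : ℝ :=
  ∑ k ∈ Finset.range (i+1), (a k : ℝ) * β⁻¹^(k+1)

set_option maxHeartbeats 1000000 in
theorem stmt_16 (m : ℕ) (hm : 3 ≤ m) (β : ℝ)
    (hβ : β = (m + Real.sqrt ((m : ℝ) ^ 2 - 4)) / 2)
    (n : ℕ) (N : ℕ) (a : ℕ → ℕ)
    (hsum : (n : ℤ) = ∑ k ∈ Finset.range (N + 1), (a k : ℤ) * U m (k + 1))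
    (hlead : a N ≠ 0)
    (hgreedy : ∀ i ≤ N,
      ∑ k ∈ Finset.range (i + 1), (a k : ℤ) * U m (k + 1) < U m (i + 2)) :
    ⌊(n : ℝ) / β⌋ = ∑ k ∈ Finset.Icc 1 N, (a k : ℤ) * U m k ∧
    (∀ i ≤ N, ∑ k ∈ Finset.Icc 1 i, (a k : ℤ) * U m k < U m (i + 1)) ∧
    Int.fract ((n : ℝ) / β) = ∑ k ∈ Finset.Icc 1 (N + 1), (a (k - 1) : ℝ) * β⁻¹ ^ k := by
  -- real preliminaries
  have hmR : (3:ℝ) ≤ (m:ℝ) := by exact_mod_cast hm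
  have h4 : (0:ℝ) ≤ (m:ℝ)^2 - 4 := by nlinarith
  have hss : Real.sqrt ((m:ℝ)^2 - 4) ^ 2 = (m:ℝ)^2 - 4 := Real.sq_sqrt h4
  have hsnn : 0 ≤ Real.sqrt ((m:ℝ)^2 - 4) := Real.sqrt_nonneg _
  have hb1 : 1 < β := by rw [hβ]; nlinarith
  have hb2 : β^2 = m*β - 1 := by rw [hβ]; linear_combination (1/4) * hss
  have hb0 : (0:ℝ) < β := by linarith
  have hbne : β ≠ 0 := ne_of_gt hb0
  have hcpos : (0:ℝ) < β⁻¹ := by positivity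
  have hc : β * β⁻¹ = 1 := mul_inv_cancel₀ hbne
  have hc1 : β⁻¹ < 1 := by
    rw [inv_lt_one_iff₀]; right; exact hb1
  have hmb : (m:ℝ) = β + β⁻¹ := m_eq m β hb1 hb2
  have hbc : ∀ j : ℕ, β * β⁻¹^(j+1) = β⁻¹^j := by
    intro j; rw [pow_succ]; linear_combination (β⁻¹^j) * hc
  have hmono : ∀ j : ℕ, β⁻¹^(j+1) ≤ β⁻¹^j := by
    intro j; exact pow_le_pow_of_le_one hcpos.le hc1.le (by omega)
  -- integer preliminaries
  have hUpos : ∀ k, 0 ≤ U m k := fun k => (U_facts m hm k).1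
  have hUlt : ∀ k, U m k < U m (k+1) := fun k => (U_facts m hm k).2
  have hU1 : ∀ k, 1 ≤ U m (k+1) := by
    intro k; induction k with
    | zero => norm_num [U]
    | succ k ih => have := hUlt (k+1); linarith
  have hg : ∀ i, i ≤ N → SpZ m a i < U m (i+2) := hgreedy
  have hg' : ∀ i, i ≤ N → SpZ m a i ≤ U m (i+2) - 1 := by
    intro i hi; have := hg i hi; omega
  have hSpnn : ∀ i, 0 ≤ SpZ m a i := by
    intro i
    apply Finset.sum_nonneg
    intro k _
    exact mul_nonneg (by positivity) (hUpos (k+1))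
  have hSprec : ∀ i, SpZ m a (i+1) = SpZ m a i + (a (i+1) : ℤ) * U m (i+2) := by
    intro i
    simp [SpZ, Finset.sum_range_succ, show i+1+1 = i+2 from rfl]
  have hTrec : ∀ i, Tsum a β (i+1) = Tsum a β i + (a (i+1) : ℝ) * β⁻¹^(i+2) := by
    intro i
    simp [Tsum, Finset.sum_range_succ, show i+1+1 = i+2 from rfl]
  have ha : ∀ i, i ≤ N → (a i : ℤ) ≤ (m:ℤ) - 1 := by
    intro i hi
    have h1 : (a i:ℤ) * U m (i+1) ≤ SpZ m a i := by
      apply Finset.single_le_sum (f := fun k => (a k:ℤ) * U m (k+1))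
        (fun k _ => mul_nonneg (by positivity) (hUpos (k+1)))
        (Finset.self_mem_range_succ i)
    have h2 := hg i hi
    have h3 : U m (i+2) = m * U m (i+1) - U m i := U_rec m i
    have h4 := hUpos i
    have h5 := hU1 i
    by_contra hcon
    push_neg at hcon
    have h6 : (m:ℤ) ≤ (a i : ℤ) := by omega
    have h7 : (m:ℤ) * U m (i+1) ≤ (a i:ℤ) * U m (i+1) :=
      mul_le_mul_of_nonneg_right h6 (by linarith)
    linarith
  -- T is nonnegative
  have hTnn : ∀ i, 0 ≤ Tsum a β i := by
    intro i
    apply Finset.sum_nonneg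
    intro k _
    positivity
  -- the key mutual induction
  have key : ∀ i, i ≤ N →
      (Tsum a β i ≤ 1 - (β - 1) * β⁻¹^(i+2)) ∧
      (SpZ m a i ≤ U m (i+2) - U m (i+1) - 1 → Tsum a β i ≤ 1 - β⁻¹^(i+1)) := by
    intro i
    induction i with
    | zero =>
      intro _
      have ha0 : (a 0 : ℤ) ≤ (m:ℤ) - 1 := ha 0 (Nat.zero_le N)
      have ha0R : (a 0 : ℝ) ≤ β + β⁻¹ - 1 := by
        have : (a 0 : ℝ) ≤ (m:ℝ) - 1 := by exact_mod_cast ha0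
        linarith
      have hT0 : Tsum a β 0 = (a 0 : ℝ) * β⁻¹^(0+1) := Finset.sum_range_one _
      have hbc1 := hbc 0
      have hbc2 := hbc 1
      have hq : β⁻¹^(0+1+1) = β⁻¹^(0+1) * β⁻¹ := pow_succ _ _
      have hp0 : (0:ℝ) ≤ β⁻¹^(0+1) := by positivity
      constructor
      · rw [hT0]
        have amul : (a 0:ℝ) * β⁻¹^(0+1) ≤ (β + β⁻¹ - 1) * β⁻¹^(0+1) :=
          mul_le_mul_of_nonneg_right ha0R hp0
        linarith [amul, hbc1, hbc2, hq, hc]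
      · intro hB
        have hU2 : U m 2 = (m:ℤ) := by rw [U_rec]; norm_num [U]
        have hU1' : U m 1 = 1 := rfl
        have hSp0 : SpZ m a 0 = (a 0:ℤ) * U m 1 := Finset.sum_range_one _
        have ha02 : (a 0 : ℤ) ≤ (m:ℤ) - 2 := by
          rw [hSp0] at hB
          norm_num [hU1', hU2] at hB
          omega
        have ha02R : (a 0 : ℝ) ≤ β + β⁻¹ - 2 := by
          have : (a 0 : ℝ) ≤ (m:ℝ) - 2 := by exact_mod_cast ha02
          linarith
        rw [hT0]
        have amul : (a 0:ℝ) * β⁻¹^(0+1) ≤ (β + β⁻¹ - 2) * β⁻¹^(0+1) :=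
          mul_le_mul_of_nonneg_right ha02R hp0
        have hsq : β⁻¹^(0+1+1) ≤ β⁻¹^(0+1) := hmono 1
        linarith [amul, hbc1, hbc2, hq, hsq, hc]
    | succ i ih =>
      intro hi1
      rw [show i+1+2 = i+3 from rfl, show i+1+1 = i+2 from rfl]
      have hiN : i ≤ N := by omega
      obtain ⟨ihA, ihB⟩ := ih hiN
      have haZ : (a (i+1) : ℤ) ≤ (m:ℤ) - 1 := ha (i+1) hi1
      have hp : (0:ℝ) ≤ β⁻¹^(i+2) := by positivity
      have hbp : β * β⁻¹^(i+2) = β⁻¹^(i+1) := hbc (i+1)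
      have hbq : β * β⁻¹^(i+3) = β⁻¹^(i+2) := hbc (i+2)
      have hq : β⁻¹^(i+3) = β⁻¹^(i+2) * β⁻¹ := pow_succ _ _
      have hmono2 : β⁻¹^(i+3) ≤ β⁻¹^(i+2) := hmono (i+2)
      have hrec : U m (i+3) = m * U m (i+2) - U m (i+1) := U_rec m (i+1)
      have hTr := hTrec i
      constructor
      · -- part A
        by_cases hcase : (a (i+1) : ℤ) ≤ (m:ℤ) - 2
        · have haR : (a (i+1) : ℝ) ≤ β + β⁻¹ - 2 := by
            have : (a (i+1) : ℝ) ≤ (m:ℝ) - 2 := by exact_mod_cast hcase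
            linarith
          have amul : (a (i+1):ℝ) * β⁻¹^(i+2) ≤ (β + β⁻¹ - 2) * β⁻¹^(i+2) :=
            mul_le_mul_of_nonneg_right haR hp
          rw [hTr]
          linarith [amul, hbp, hbq, hq, ihA]
        · have haeq : (a (i+1) : ℤ) = (m:ℤ) - 1 := by omega
          -- derive B hypothesis at level i
          have hgs := hg' (i+1) hi1
          rw [hSprec i, haeq, hrec] at hgs
          have hBi : SpZ m a i ≤ U m (i+2) - U m (i+1) - 1 := by linarith
          have hTB := ihB hBi
          have haR : (a (i+1) : ℝ) ≤ β + β⁻¹ - 1 := by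
            have : (a (i+1) : ℝ) ≤ (m:ℝ) - 1 := by exact_mod_cast haZ
            linarith
          have amul : (a (i+1):ℝ) * β⁻¹^(i+2) ≤ (β + β⁻¹ - 1) * β⁻¹^(i+2) :=
            mul_le_mul_of_nonneg_right haR hp
          rw [hTr]
          linarith [amul, hbp, hbq, hq, hTB]
      · -- part B
        intro hB
        rw [hSprec i] at hB
        by_cases hc3 : (a (i+1) : ℤ) ≤ (m:ℤ) - 3
        · have haR : (a (i+1) : ℝ) ≤ β + β⁻¹ - 3 := by
            have : (a (i+1) : ℝ) ≤ (m:ℝ) - 3 := by exact_mod_cast hc3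
            linarith
          have amul : (a (i+1):ℝ) * β⁻¹^(i+2) ≤ (β + β⁻¹ - 3) * β⁻¹^(i+2) :=
            mul_le_mul_of_nonneg_right haR hp
          rw [hTr]
          linarith [amul, hbp, hbq, hq, ihA, hmono2]
        · by_cases hc2 : (a (i+1) : ℤ) = (m:ℤ) - 2
          · have hBi : SpZ m a i ≤ U m (i+2) - U m (i+1) - 1 := by
              rw [hc2] at hB
              have h5 := hU1 (i+1)
              linarith [hB, hrec]
            have hTB := ihB hBi
            have haR : (a (i+1) : ℝ) ≤ β + β⁻¹ - 2 := by
              have : (a (i+1) : ℝ) ≤ (m:ℝ) - 2 := by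
                exact_mod_cast le_of_eq hc2
              linarith
            have amul : (a (i+1):ℝ) * β⁻¹^(i+2) ≤ (β + β⁻¹ - 2) * β⁻¹^(i+2) :=
              mul_le_mul_of_nonneg_right haR hp
            rw [hTr]
            linarith [amul, hbp, hbq, hq, hTB, hmono2]
          · have haeq : (a (i+1) : ℤ) = (m:ℤ) - 1 := by omega
            exfalso
            rw [haeq] at hB
            have h5 := hU1 i
            have h6 := hSpnn i
            have h7 := hU1 (i+1)
            linarith [hB, hrec]
  -- bridge: Sp = β(S + T)
  have hST : ∀ i, ((SpZ m a i : ℤ) : ℝ) = β * (((SZ m a i : ℤ) : ℝ) + Tsum a β i) := by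
    intro i
    unfold SpZ SZ Tsum
    push_cast
    rw [mul_add, Finset.mul_sum, Finset.mul_sum, ← Finset.sum_add_distrib]
    apply Finset.sum_congr rfl
    intro k _
    rw [U_real m β hb1 hb2 k]
    linear_combination (-(a k : ℝ)) * hbc k
  have hTltone : Tsum a β N < 1 := by
    have h := (key N le_rfl).1
    have hpp : 0 < (β-1) * β⁻¹^(N+2) := mul_pos (by linarith) (by positivity)
    linarith
  have hdiv : (n:ℝ)/β = ((SZ m a N : ℤ) : ℝ) + Tsum a β N := by
    have h1 : (n:ℝ) = ((SpZ m a N : ℤ) : ℝ) := by exact_mod_cast hsum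
    rw [h1, hST N, mul_div_cancel_left₀ _ hbne]
  have hfloor : ⌊(n:ℝ)/β⌋ = SZ m a N := by
    rw [hdiv, Int.floor_intCast_add]
    have : ⌊Tsum a β N⌋ = 0 := Int.floor_eq_zero_iff.mpr ⟨hTnn N, hTltone⟩
    omega
  have hfract : Int.fract ((n:ℝ)/β) = Tsum a β N := by
    rw [hdiv, Int.fract_intCast_add, Int.fract_eq_self.mpr ⟨hTnn N, hTltone⟩]
  -- sum over range = sum over Icc (dropping the k = 0 term, since U m 0 = 0)
  have hSZIcc : ∀ i, SZ m a i = ∑ k ∈ Finset.Icc 1 i, (a k : ℤ) * U m k := by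
    intro i
    unfold SZ
    refine (Finset.sum_subset ?_ ?_).symm
    · intro x hx
      simp only [Finset.mem_Icc] at hx
      simp only [Finset.mem_range]
      omega
    · intro x hx hnx
      simp only [Finset.mem_range] at hx
      simp only [Finset.mem_Icc] at hnx
      have hx0 : x = 0 := by omega
      subst hx0
      simp [U]
  -- reindexing for the fractional part
  have hTIcc : ∀ i, Tsum a β i = ∑ k ∈ Finset.Icc 1 (i+1), (a (k-1) : ℝ) * β⁻¹^k := by
    intro i
    induction i with
    | zero => simp [Tsum]
    | succ i ih =>
      rw [hTrec i, ih, Finset.sum_Icc_succ_top (by omega : 1 ≤ i+1+1)]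
      congr 2
  -- second bullet
  have hlt : ∀ i, i ≤ N → SZ m a i < U m (i+1) := by
    intro i hi
    have h1 : ((SpZ m a i : ℤ):ℝ) ≤ ((U m (i+2) : ℤ):ℝ) - 1 := by
      exact_mod_cast hg' i hi
    have h2 := hST i
    have h3 := hTnn i
    have hU2 : ((U m (i+2) : ℤ) :ℝ) = β * ((U m (i+1) : ℤ):ℝ) + β⁻¹^(i+1) :=
      U_real m β hb1 hb2 (i+1)
    have hcl : β⁻¹^(i+1) < 1 := pow_lt_one₀ hcpos.le hc1 (by omega)
    have h6 : β * ((SZ m a i : ℤ):ℝ) < β * ((U m (i+1) : ℤ):ℝ) := by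
      nlinarith [mul_nonneg hb0.le h3]
    have h7 : ((SZ m a i : ℤ):ℝ) < ((U m (i+1) : ℤ):ℝ) :=
      lt_of_mul_lt_mul_left h6 hb0.le
    exact_mod_cast h7
  refine ⟨?_, ?_, ?_⟩
  · rw [hfloor, hSZIcc N]
  · intro i hi
    rw [← hSZIcc i]
    exact hlt i hi
  · rw [hfract, hTIcc N]
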